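/- Let X ∈ ℝ^{N×I} have rank R and M be an uncentered whitening matrix for X. Then for any W ∈ ℝ^{I×O} and rank bound P, ‖XW − T_P(XW)‖_F = ‖XW − X M T_P(M⁺ W)‖_F, where T_P denotes best rank-P SVD truncation; i.e., the activation-aware factorization achieves the Eckart–Young–Mirsky optimal output distortion. -/

import Mathlib

open Matrix

/-- Squared Frobenius norm of a matrix. -/
def frobSq {m n : Type*} [Fintype m] [Fintype n] (A : Matrix m n ℝ) : ℝ :=
  ∑ i, ∑ j, (A i j) ^ 2

/-- Frobenius norm of a matrix. -/
noncomputable def frobNorm {m n : Type*} [Fintype m] [Fintype n] (A : Matrix m n ℝ) : ℝ :=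
  Real.sqrt (frobSq A)

/-- `Ī_R`: the `I×I` matrix equal to the identity on the first `R` coordinates and zero
elsewhere. -/
def Ibar (I R : ℕ) : Matrix (Fin I) (Fin I) ℝ :=
  Matrix.of fun i j => if i = j ∧ (i : ℕ) < R then (1 : ℝ) else 0

/-- `Mp` is the Moore–Penrose pseudoinverse of `M` (the four Penrose conditions). -/
def IsMoorePenrose {I : ℕ} (M Mp : Matrix (Fin I) (Fin I) ℝ) : Prop :=
  M * Mp * M = M ∧ Mp * M * Mp = Mp ∧ (M * Mp)ᵀ = M * Mp ∧ (Mp * M)ᵀ = Mp * M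

/-- Rectangular "diagonal" matrix with entries `s 0, s 1, …` on the main diagonal. -/
def rectDiag (I O : ℕ) (s : ℕ → ℝ) : Matrix (Fin I) (Fin O) ℝ :=
  Matrix.of fun i j => if (i : ℕ) = (j : ℕ) then s (i : ℕ) else 0

section Aux

open Polynomial

lemma frobSq_eq_trace {m n : Type*} [Fintype m] [Fintype n] (A : Matrix m n ℝ) :
    frobSq A = (Aᵀ * A).trace := by
  simp [frobSq, Matrix.trace, Matrix.diag, Matrix.mul_apply, sq]
  rw [Finset.sum_comm]

lemma frobSq_mul_orthT {m n p : Type*} [Fintype m] [Fintype n] [Fintype p] [DecidableEq n]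
    (A : Matrix m n ℝ) (V : Matrix p n ℝ) (hV : Vᵀ * V = 1) :
    frobSq (A * Vᵀ) = frobSq A := by
  rw [frobSq_eq_trace, frobSq_eq_trace, Matrix.transpose_mul, Matrix.transpose_transpose]
  calc (V * Aᵀ * (A * Vᵀ)).trace = (V * (Aᵀ * A) * Vᵀ).trace := by
        simp only [Matrix.mul_assoc]
    _ = (Vᵀ * V * (Aᵀ * A)).trace := by rw [Matrix.trace_mul_cycle, Matrix.mul_assoc]
    _ = (Aᵀ * A).trace := by rw [hV, Matrix.one_mul]

lemma frobSq_orth_mul {m n p : Type*} [Fintype m] [Fintype n] [Fintype p] [DecidableEq m]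
    (A : Matrix m n ℝ) (U : Matrix p m ℝ) (hU : Uᵀ * U = 1) :
    frobSq (U * A) = frobSq A := by
  rw [frobSq_eq_trace, frobSq_eq_trace, Matrix.transpose_mul]
  calc (Aᵀ * Uᵀ * (U * A)).trace = (Aᵀ * (Uᵀ * U) * A).trace := by
        simp only [Matrix.mul_assoc]
    _ = (Aᵀ * A).trace := by rw [hU, Matrix.mul_one]

lemma charpoly_diagonal' {n : ℕ} (f : Fin n → ℝ) :
    (Matrix.diagonal f).charpoly = ∏ i : Fin n, (X - C (f i)) := by
  rw [Matrix.charpoly_of_upperTriangular _ (Matrix.blockTriangular_diagonal f)]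
  simp

lemma charpoly_conj' {n : ℕ} (Q A : Matrix (Fin n) (Fin n) ℝ) (hQ : Qᵀ * Q = 1) :
    (Q * A * Qᵀ).charpoly = A.charpoly := by
  have hQ' : Q * Qᵀ = 1 := mul_eq_one_comm.mp hQ
  have h1 : (C : ℝ →+* ℝ[X]).mapMatrix Q * (C : ℝ →+* ℝ[X]).mapMatrix Qᵀ = 1 := by
    rw [← _root_.map_mul, hQ', _root_.map_one]
  have h2 : (C : ℝ →+* ℝ[X]).mapMatrix Qᵀ * (C : ℝ →+* ℝ[X]).mapMatrix Q = 1 := by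
    rw [← _root_.map_mul, hQ, _root_.map_one]
  rw [Matrix.charpoly, Matrix.charpoly]
  have hc : charmatrix (Q * A * Qᵀ) =
      ((C : ℝ →+* ℝ[X]).mapMatrix Q) * charmatrix A * ((C : ℝ →+* ℝ[X]).mapMatrix Qᵀ) := by
    unfold charmatrix
    rw [Matrix.mul_sub, Matrix.sub_mul]
    congr 1
    · rw [Matrix.scalar_apply, ← Matrix.smul_one_eq_diagonal, Matrix.mul_smul, Matrix.mul_one,
        Matrix.smul_mul, h1]
    · simp [← Matrix.mul_assoc]
  rw [hc, Matrix.det_mul, Matrix.det_mul, mul_comm, ← mul_assoc, ← Matrix.det_mul, h2]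
  simp

lemma antitone_eq_of_multiset {n : ℕ} (f g : Fin n → ℝ)
    (hf : ∀ i j : Fin n, i ≤ j → f j ≤ f i) (hg : ∀ i j : Fin n, i ≤ j → g j ≤ g i)
    (h : Multiset.map f Finset.univ.val = Multiset.map g Finset.univ.val) : f = g := by
  have e : ∀ (f : Fin n → ℝ), (↑(List.ofFn f) : Multiset ℝ) = Multiset.map f Finset.univ.val := by
    intro f
    rw [List.ofFn_eq_map]
    rfl
  have hl : List.Perm (List.ofFn f) (List.ofFn g) := by
    rw [← Multiset.coe_eq_coe, e, e, h]
  have hsf : (List.ofFn f).Pairwise (· ≥ ·) := by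
    rw [List.pairwise_ofFn]
    exact fun i j hij => hf i j hij.le
  have hsg : (List.ofFn g).Pairwise (· ≥ ·) := by
    rw [List.pairwise_ofFn]
    exact fun i j hij => hg i j hij.le
  exact List.ofFn_injective (List.Perm.eq_of_pairwise (fun a b _ _ h1 h2 => le_antisymm h2 h1) hsf hsg hl)

lemma multiset_of_prod_eq {n : ℕ} (f g : Fin n → ℝ)
    (h : ∏ i : Fin n, (X - C (f i)) = ∏ i : Fin n, (X - C (g i))) :
    Multiset.map f Finset.univ.val = Multiset.map g Finset.univ.val := by
  have e : ∀ (f : Fin n → ℝ), (∏ i : Fin n, (X - C (f i))) =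
      ((Multiset.map f Finset.univ.val).map fun a => X - C a).prod := by
    intro f
    rw [Multiset.map_map, Finset.prod_eq_multiset_prod]
    rfl
  rw [e f, e g] at h
  have := congrArg Polynomial.roots h
  rwa [roots_multiset_prod_X_sub_C, roots_multiset_prod_X_sub_C] at this

lemma rectDiag_transpose_mul_self {I O : ℕ} (s : ℕ → ℝ) :
    (rectDiag I O s)ᵀ * rectDiag I O s
      = Matrix.diagonal (fun j : Fin O => if (j : ℕ) < I then s (j : ℕ) ^ 2 else 0) := by
  ext j k
  simp only [Matrix.mul_apply, Matrix.transpose_apply, rectDiag, Matrix.of_apply,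
    Matrix.diagonal_apply]
  rw [Finset.sum_congr rfl (fun i _ => ?_), Fin.sum_univ_eq_sum_range
    (fun i => if i = (j:ℕ) ∧ i = (k:ℕ) then s i ^ 2 else 0)]
  · by_cases hjk : j = k
    · subst hjk
      simp only [and_self]
      rw [Finset.sum_ite_eq' (Finset.range I) (j:ℕ) (fun i => s i ^ 2)]
      simp [Finset.mem_range]
    · have : (j:ℕ) ≠ (k:ℕ) := fun h => hjk (Fin.ext h)
      rw [if_neg hjk, Finset.sum_eq_zero]
      intro i _
      rw [if_neg]
      rintro ⟨h1, h2⟩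
      exact this (h1 ▸ h2)
  · by_cases h1 : (i:ℕ) = (j:ℕ) <;> by_cases h2 : (i:ℕ) = (k:ℕ) <;> simp [h1, h2, sq]

lemma frobSq_rectDiag {I O : ℕ} (s : ℕ → ℝ) :
    frobSq (rectDiag I O s) = ∑ j : Fin O, if (j : ℕ) < I then s (j : ℕ) ^ 2 else 0 := by
  rw [frobSq_eq_trace, rectDiag_transpose_mul_self, Matrix.trace_diagonal]

lemma mul_rectDiag_apply {n I O : ℕ} (A : Matrix (Fin n) (Fin I) ℝ) (s : ℕ → ℝ)
    (j : Fin n) (k : Fin O) :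
    (A * rectDiag I O s) j k = if h : (k : ℕ) < I then A j ⟨k, h⟩ * s (k : ℕ) else 0 := by
  simp only [Matrix.mul_apply, rectDiag, Matrix.of_apply]
  split
  · next h =>
    rw [Finset.sum_eq_single ⟨(k:ℕ), h⟩]
    · simp
    · intro b _ hb
      rw [if_neg, mul_zero]
      intro hc
      exact hb (Fin.ext hc)
    · simp
  · next h =>
    apply Finset.sum_eq_zero
    intro i _
    rw [if_neg, mul_zero]
    intro hc
    exact h (hc ▸ i.isLt)

lemma rectDiag_sub {I O : ℕ} (s : ℕ → ℝ) (P : ℕ) :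
    rectDiag I O s - rectDiag I O (fun i => if i < P then s i else 0)
      = rectDiag I O (fun i => if i < P then 0 else s i) := by
  ext i j
  simp only [Matrix.sub_apply, rectDiag, Matrix.of_apply]
  split <;> [skip; simp]
  split <;> simp

lemma ext_of_mulVec {a b : ℕ} {A B : Matrix (Fin a) (Fin b) ℝ}
    (h : ∀ v, A.mulVec v = B.mulVec v) : A = B := by
  ext i j
  have := congrFun (h (Pi.single j 1)) i
  simpa using this

end Aux

theorem activation_aware_factorization_optimal {N I O R : ℕ}
    (X : Matrix (Fin N) (Fin I) ℝ) (hR : X.rank = R)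
    (M Mp : Matrix (Fin I) (Fin I) ℝ)
    (hW : Mᵀ * (Xᵀ * X) * M = (N : ℝ) • Ibar I R)
    (hrange : LinearMap.range M.mulVecLin = LinearMap.range Xᵀ.mulVecLin)
    (hMp : IsMoorePenrose M Mp)
    (W : Matrix (Fin I) (Fin O) ℝ)
    -- an SVD `X * W = U₁ Σ₁ V₁ᵀ` with nonincreasing nonnegative singular values `s₁`
    (U₁ : Matrix (Fin N) (Fin N) ℝ) (V₁ : Matrix (Fin O) (Fin O) ℝ) (s₁ : ℕ → ℝ)
    (hU₁ : U₁ᵀ * U₁ = 1) (hV₁ : V₁ᵀ * V₁ = 1)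
    (hs₁0 : ∀ i, 0 ≤ s₁ i) (hs₁mono : ∀ i j : ℕ, i ≤ j → s₁ j ≤ s₁ i)
    (hSVD₁ : X * W = U₁ * rectDiag N O s₁ * V₁ᵀ)
    -- an SVD `Mp * W = U₂ Σ₂ V₂ᵀ` with nonincreasing nonnegative singular values `s₂`
    (U₂ : Matrix (Fin I) (Fin I) ℝ) (V₂ : Matrix (Fin O) (Fin O) ℝ) (s₂ : ℕ → ℝ)
    (hU₂ : U₂ᵀ * U₂ = 1) (hV₂ : V₂ᵀ * V₂ = 1)
    (hs₂0 : ∀ i, 0 ≤ s₂ i) (hs₂mono : ∀ i j : ℕ, i ≤ j → s₂ j ≤ s₂ i)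
    (hSVD₂ : Mp * W = U₂ * rectDiag I O s₂ * V₂ᵀ)
    (P : ℕ) :
    frobNorm (X * W - U₁ * rectDiag N O (fun i => if i < P then s₁ i else 0) * V₁ᵀ)
      = frobNorm (X * W -
          X * M * (U₂ * rectDiag I O (fun i => if i < P then s₂ i else 0) * V₂ᵀ)) := by
  obtain ⟨hP1, hP2, hP3, hP4⟩ := hMp
  -- X * M * Mp = X
  have hXMMp : X * M * Mp = X := by
    have key : M * Mp * Xᵀ = Xᵀ := by
      apply ext_of_mulVec
      intro v
      have hv : Xᵀ.mulVec v ∈ LinearMap.range M.mulVecLin := by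
        rw [hrange]; exact ⟨v, rfl⟩
      obtain ⟨u, hu⟩ := hv
      simp only [Matrix.mulVecLin_apply] at hu
      rw [← Matrix.mulVec_mulVec, ← hu, Matrix.mulVec_mulVec, hP1, hu]
    have h2 := congrArg Matrix.transpose key
    rw [Matrix.transpose_mul, Matrix.transpose_transpose, hP3] at h2
    rw [Matrix.mul_assoc, h2]
  -- M * Ibar = M
  have hMI : M * Ibar I R = M := by
    have col : ∀ i : Fin I, R ≤ (i : ℕ) → ∀ j, M j i = 0 := by
      intro i hi
      have hdiag : ∑ k, ((X * M) k i)^2 = 0 := by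
        have := congrFun (congrFun hW i) i
        simp only [Matrix.smul_apply, Ibar, Matrix.of_apply] at this
        rw [if_neg (by omega), smul_zero] at this
        rw [← this]
        rw [show Mᵀ * (Xᵀ * X) * M = (X * M)ᵀ * (X * M) by
          simp only [Matrix.transpose_mul, Matrix.mul_assoc]]
        rw [Matrix.mul_apply]
        exact Finset.sum_congr rfl fun k _ => by rw [Matrix.transpose_apply, sq]
      have hXMcol : ∀ k, (X * M) k i = 0 := by
        intro k
        have h0 : ∀ k ∈ Finset.univ, (0:ℝ) ≤ ((X * M) k i)^2 := fun _ _ => sq_nonneg _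
        have := (Finset.sum_eq_zero_iff_of_nonneg h0).mp hdiag k (Finset.mem_univ k)
        exact pow_eq_zero_iff (by norm_num) |>.mp this
      have hv : M.mulVec (Pi.single i 1) ∈ LinearMap.range Xᵀ.mulVecLin := by
        rw [← hrange]; exact ⟨Pi.single i 1, rfl⟩
      obtain ⟨u, hu⟩ := hv
      simp only [Matrix.mulVecLin_apply] at hu
      set v := M.mulVec (Pi.single i 1) with hvdef
      have hXv : X.mulVec v = 0 := by
        rw [hvdef, Matrix.mulVec_mulVec]
        ext k
        simpa using hXMcol k
      have hvv : v ⬝ᵥ v = 0 := by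
        calc v ⬝ᵥ v = v ⬝ᵥ (Xᵀ *ᵥ u) := by rw [hu]
          _ = (v ᵥ* Xᵀ) ⬝ᵥ u := Matrix.dotProduct_mulVec v Xᵀ u
          _ = (X *ᵥ v) ⬝ᵥ u := by rw [Matrix.vecMul_transpose]
          _ = 0 := by rw [hXv, zero_dotProduct]
      have hv0 : v = 0 := by rwa [dotProduct_self_eq_zero] at hvv
      intro j
      have := congrFun hv0 j
      simpa [hvdef] using this
    ext j k
    simp only [Matrix.mul_apply, Ibar, Matrix.of_apply]
    by_cases hk : (k:ℕ) < R
    · rw [Finset.sum_eq_single k (fun b _ hb => by rw [if_neg (fun h => hb h.1), mul_zero])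
        (by simp), if_pos ⟨rfl, hk⟩, mul_one]
    · rw [Finset.sum_eq_zero (fun b _ => by
        rw [if_neg (fun h : b = k ∧ (b:ℕ) < R => hk (h.1 ▸ h.2)), mul_zero])]
      exact (col k (le_of_not_gt hk) j).symm
  -- Ibar * Mp = Mp
  have hIbarT : (Ibar I R)ᵀ = Ibar I R := by
    ext i j
    simp only [Matrix.transpose_apply, Ibar, Matrix.of_apply]
    by_cases h : i = j
    · subst h; rfl
    · rw [if_neg, if_neg]
      · rintro ⟨h1, -⟩; exact h h1
      · rintro ⟨h1, -⟩; exact h h1.symm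
  have hIbarMT : Ibar I R * Mᵀ = Mᵀ := by
    have := congrArg Matrix.transpose hMI
    rwa [Matrix.transpose_mul, hIbarT] at this
  have hIMp : Ibar I R * Mp = Mp := by
    have hMpM : Mp * M = Mᵀ * Mpᵀ := by rw [← hP4, Matrix.transpose_mul]
    calc Ibar I R * Mp = Ibar I R * (Mp * M * Mp) := by rw [hP2]
      _ = Ibar I R * Mᵀ * Mpᵀ * Mp := by rw [hMpM]; simp only [Matrix.mul_assoc]
      _ = Mᵀ * Mpᵀ * Mp := by rw [hIbarMT]
      _ = Mp * M * Mp := by rw [← hMpM]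
      _ = Mp := hP2
  -- abbreviations for tails
  set t₁ : ℕ → ℝ := fun i => if i < P then 0 else s₁ i with ht₁
  set t₂ : ℕ → ℝ := fun i => if i < P then 0 else s₂ i with ht₂
  -- X*W through the factorization
  have hXW2 : X * W = X * M * (U₂ * rectDiag I O s₂ * V₂ᵀ) := by
    rw [← hSVD₂, ← Matrix.mul_assoc, hXMMp]
  -- Ibar absorbs U₂ * Σ₂
  have hIC : Ibar I R * (U₂ * rectDiag I O s₂) = U₂ * rectDiag I O s₂ := by
    have h1 : Ibar I R * (Mp * W) = Mp * W := by rw [← Matrix.mul_assoc, hIMp]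
    rw [hSVD₂] at h1
    calc Ibar I R * (U₂ * rectDiag I O s₂)
        = Ibar I R * (U₂ * rectDiag I O s₂) * (V₂ᵀ * V₂) := by rw [hV₂, Matrix.mul_one]
      _ = (Ibar I R * (U₂ * rectDiag I O s₂ * V₂ᵀ)) * V₂ := by
          simp only [Matrix.mul_assoc]
      _ = (U₂ * rectDiag I O s₂ * V₂ᵀ) * V₂ := by rw [h1]
      _ = U₂ * rectDiag I O s₂ * (V₂ᵀ * V₂) := by simp only [Matrix.mul_assoc]
      _ = U₂ * rectDiag I O s₂ := by rw [hV₂, Matrix.mul_one]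
  have hICt : Ibar I R * (U₂ * rectDiag I O t₂) = U₂ * rectDiag I O t₂ := by
    have hIC' : (Ibar I R * U₂) * rectDiag I O s₂ = U₂ * rectDiag I O s₂ := by
      rw [Matrix.mul_assoc]; exact hIC
    rw [← Matrix.mul_assoc]
    ext j k
    rw [mul_rectDiag_apply, mul_rectDiag_apply]
    split
    · next h =>
      by_cases hp : (k:ℕ) < P
      · simp [ht₂, hp]
      · have hthis := congrFun (congrFun hIC' j) k
        rw [mul_rectDiag_apply, mul_rectDiag_apply, dif_pos h, dif_pos h] at hthis
        simp only [ht₂, if_neg hp]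
        exact hthis
    · rfl
  -- LHS squared norm
  have hL : frobSq (X * W - U₁ * rectDiag N O (fun i => if i < P then s₁ i else 0) * V₁ᵀ)
      = frobSq (rectDiag N O t₁) := by
    rw [hSVD₁]
    rw [show U₁ * rectDiag N O s₁ * V₁ᵀ
          - U₁ * rectDiag N O (fun i => if i < P then s₁ i else 0) * V₁ᵀ
        = U₁ * rectDiag N O t₁ * V₁ᵀ by
      rw [← Matrix.sub_mul, ← Matrix.mul_sub, rectDiag_sub]]
    rw [frobSq_mul_orthT _ V₁ hV₁, frobSq_orth_mul _ U₁ hU₁]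
  -- RHS squared norm
  have hRR : frobSq (X * W -
        X * M * (U₂ * rectDiag I O (fun i => if i < P then s₂ i else 0) * V₂ᵀ))
      = (N:ℝ) * frobSq (rectDiag I O t₂) := by
    rw [hXW2]
    rw [show X * M * (U₂ * rectDiag I O s₂ * V₂ᵀ)
          - X * M * (U₂ * rectDiag I O (fun i => if i < P then s₂ i else 0) * V₂ᵀ)
        = X * M * (U₂ * rectDiag I O t₂) * V₂ᵀ by
      rw [← Matrix.mul_sub, ← Matrix.sub_mul, ← Matrix.mul_sub, rectDiag_sub, ht₂]
      simp only [Matrix.mul_assoc]]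
    rw [frobSq_mul_orthT _ V₂ hV₂]
    rw [frobSq_eq_trace]
    rw [show (X * M * (U₂ * rectDiag I O t₂))ᵀ * (X * M * (U₂ * rectDiag I O t₂))
        = (U₂ * rectDiag I O t₂)ᵀ * ((Mᵀ * (Xᵀ * X) * M) * (U₂ * rectDiag I O t₂)) by
      simp only [Matrix.transpose_mul, Matrix.mul_assoc]]
    rw [hW, Matrix.smul_mul, hICt, Matrix.mul_smul, Matrix.trace_smul, smul_eq_mul]
    congr 1
    rw [← frobSq_eq_trace, frobSq_orth_mul _ U₂ hU₂]
  -- the two diagonal spectra coincide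
  set f : Fin O → ℝ := fun j => if (j:ℕ) < N then s₁ (j:ℕ) ^ 2 else 0 with hf
  set g : Fin O → ℝ := fun j => (N:ℝ) * (if (j:ℕ) < I then s₂ (j:ℕ) ^ 2 else 0) with hg
  have hGram : V₁ * Matrix.diagonal f * V₁ᵀ = V₂ * Matrix.diagonal g * V₂ᵀ := by
    have lhs : (X*W)ᵀ * (X*W) = V₁ * Matrix.diagonal f * V₁ᵀ := by
      rw [hSVD₁]
      rw [show (U₁ * rectDiag N O s₁ * V₁ᵀ)ᵀ * (U₁ * rectDiag N O s₁ * V₁ᵀ)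
          = V₁ * ((rectDiag N O s₁)ᵀ * ((U₁ᵀ * U₁) * (rectDiag N O s₁ * V₁ᵀ))) by
        simp only [Matrix.transpose_mul, Matrix.transpose_transpose, Matrix.mul_assoc]]
      rw [hU₁, Matrix.one_mul, ← Matrix.mul_assoc (rectDiag N O s₁)ᵀ _ _,
        rectDiag_transpose_mul_self, ← Matrix.mul_assoc, hf]
    have rhs : (X*W)ᵀ * (X*W) = V₂ * Matrix.diagonal g * V₂ᵀ := by
      rw [hXW2]
      rw [show (X * M * (U₂ * rectDiag I O s₂ * V₂ᵀ))ᵀ * (X * M * (U₂ * rectDiag I O s₂ * V₂ᵀ))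
          = V₂ * ((U₂ * rectDiag I O s₂)ᵀ
              * ((Mᵀ * (Xᵀ * X) * M) * (U₂ * rectDiag I O s₂)) * V₂ᵀ) by
        simp only [Matrix.transpose_mul, Matrix.transpose_transpose, Matrix.mul_assoc]]
      rw [hW, Matrix.smul_mul, hIC, Matrix.mul_smul]
      rw [show (U₂ * rectDiag I O s₂)ᵀ * (U₂ * rectDiag I O s₂)
          = (rectDiag I O s₂)ᵀ * ((U₂ᵀ * U₂) * rectDiag I O s₂) by
        simp only [Matrix.transpose_mul, Matrix.mul_assoc]]
      rw [hU₂, Matrix.one_mul, rectDiag_transpose_mul_self]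
      rw [show ((N:ℝ) • (Matrix.diagonal fun j : Fin O => if (j:ℕ) < I then s₂ (j:ℕ) ^ 2 else 0))
          = Matrix.diagonal g by
        ext j k
        rw [hg]
        by_cases h : j = k
        · subst h; simp
        · simp [Matrix.diagonal_apply_ne _ h, h]]
      rw [← Matrix.mul_assoc]
    rw [← lhs, rhs]
  have hfg : f = g := by
    have hV₁' : V₁ * V₁ᵀ = 1 := mul_eq_one_comm.mp hV₁
    have hV₂' : V₂ * V₂ᵀ = 1 := mul_eq_one_comm.mp hV₂
    set Q := V₁ᵀ * V₂ with hQdef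
    have hQ : Qᵀ * Q = 1 := by
      rw [hQdef, Matrix.transpose_mul, Matrix.transpose_transpose]
      calc V₂ᵀ * V₁ * (V₁ᵀ * V₂) = V₂ᵀ * (V₁ * V₁ᵀ) * V₂ := by simp only [Matrix.mul_assoc]
        _ = 1 := by rw [hV₁', Matrix.mul_one, hV₂]
    have hconj : Matrix.diagonal f = Q * Matrix.diagonal g * Qᵀ := by
      have := congrArg (fun A => V₁ᵀ * A * V₁) hGram
      calc Matrix.diagonal f
          = (V₁ᵀ * V₁) * Matrix.diagonal f * (V₁ᵀ * V₁) := by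
            rw [hV₁, Matrix.one_mul, Matrix.mul_one]
        _ = V₁ᵀ * (V₁ * Matrix.diagonal f * V₁ᵀ) * V₁ := by simp only [Matrix.mul_assoc]
        _ = V₁ᵀ * (V₂ * Matrix.diagonal g * V₂ᵀ) * V₁ := by rw [hGram]
        _ = Q * Matrix.diagonal g * Qᵀ := by
            rw [hQdef, Matrix.transpose_mul, Matrix.transpose_transpose]
            simp only [Matrix.mul_assoc]
    have hcp : (Matrix.diagonal f).charpoly = (Matrix.diagonal g).charpoly := by
      rw [hconj, charpoly_conj' Q _ hQ]
    rw [charpoly_diagonal', charpoly_diagonal'] at hcp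
    apply antitone_eq_of_multiset f g ?_ ?_ (multiset_of_prod_eq f g hcp)
    · intro i j hij
      simp only [hf]
      by_cases hj : (j:ℕ) < N
      · rw [if_pos hj, if_pos (lt_of_le_of_lt (Fin.le_iff_val_le_val.mp hij) hj)]
        exact pow_le_pow_left₀ (hs₁0 _) (hs₁mono _ _ (Fin.le_iff_val_le_val.mp hij)) 2
      · rw [if_neg hj]
        split
        · exact sq_nonneg _
        · exact le_rfl
    · intro i j hij
      simp only [hg]
      apply mul_le_mul_of_nonneg_left _ (Nat.cast_nonneg N)
      by_cases hj : (j:ℕ) < I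
      · rw [if_pos hj, if_pos (lt_of_le_of_lt (Fin.le_iff_val_le_val.mp hij) hj)]
        exact pow_le_pow_left₀ (hs₂0 _) (hs₂mono _ _ (Fin.le_iff_val_le_val.mp hij)) 2
      · rw [if_neg hj]
        split
        · exact sq_nonneg _
        · exact le_rfl
  -- conclude
  have hSq : frobSq (rectDiag N O t₁) = (N:ℝ) * frobSq (rectDiag I O t₂) := by
    rw [frobSq_rectDiag, frobSq_rectDiag, Finset.mul_sum]
    apply Finset.sum_congr rfl
    intro j _
    have hfgj := congrFun hfg j
    simp only [hf, hg] at hfgj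
    by_cases hp : (j:ℕ) < P
    · simp [ht₁, ht₂, hp]
    · simp only [ht₁, ht₂, if_neg hp]
      exact hfgj
  unfold frobNorm
  rw [hL, hRR, hSq]
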